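/- For real numbers l, σ, a, b with 0 < σ < b ≤ a and √((a−σ)² + (b−σ)²) < l, one has (b−σ)·A(l,a−σ) + (a−σ)·B(l,b−σ) − AB(l,a−σ,b−σ) + (σa + σb − σ²)·π = π·a·b; equivalently, the spherocylinder intersection probability P(l,σ,a,b) equals 1. -/
import Mathlib


open Real MeasureTheory Filter

/-- `A(l,a) = ∫_0^π min(a, l·|cos φ|) dφ` -/
noncomputable def A2 (l a : ℝ) : ℝ := ∫ φ in (0:ℝ)..π, min a (l * |Real.cos φ|)

/-- `B(l,b) = ∫_0^π min(b, l·sin φ) dφ` -/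
noncomputable def B2 (l b : ℝ) : ℝ := ∫ φ in (0:ℝ)..π, min b (l * Real.sin φ)

/-- `AB(l,a,b) = ∫_0^π min(a, l·|cos φ|)·min(b, l·sin φ) dφ` -/
noncomputable def AB2 (l a b : ℝ) : ℝ :=
  ∫ φ in (0:ℝ)..π, min a (l * |Real.cos φ|) * min b (l * Real.sin φ)

/-- Intersection probability for the 2D Buffon–Laplace needle problem. -/
noncomputable def P2 (l a b : ℝ) : ℝ :=
  (b * A2 l a + a * B2 l b - AB2 l a b) / (π * a * b)

/-- Intersection probability for the 2D spherocylinder Buffon–Laplace problem. -/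
noncomputable def P2sc (l σ a b : ℝ) : ℝ :=
  ((b - σ) * A2 l (a - σ) + (a - σ) * B2 l (b - σ) - AB2 l (a - σ) (b - σ)
    + (σ * a + σ * b - σ ^ 2) * π) / (π * a * b)

/-- `A³ᴰ(l,a) = ∫_0^{π/2} ∫_0^π min(a, l·sin ψ·|cos φ|) dφ dψ` -/
noncomputable def A3 (l a : ℝ) : ℝ :=
  ∫ ψ in (0:ℝ)..(π/2), ∫ φ in (0:ℝ)..π, min a (l * Real.sin ψ * |Real.cos φ|)

/-- `B³ᴰ(l,b) = ∫_0^{π/2} ∫_0^π min(b, l·sin ψ·sin φ) dφ dψ` -/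
noncomputable def B3 (l b : ℝ) : ℝ :=
  ∫ ψ in (0:ℝ)..(π/2), ∫ φ in (0:ℝ)..π, min b (l * Real.sin ψ * Real.sin φ)

/-- `AB³ᴰ(l,a,b) = ∫_0^{π/2} ∫_0^π min(a, l·sin ψ·|cos φ|)·min(b, l·sin ψ·sin φ) dφ dψ` -/
noncomputable def AB3 (l a b : ℝ) : ℝ :=
  ∫ ψ in (0:ℝ)..(π/2), ∫ φ in (0:ℝ)..π,
    min a (l * Real.sin ψ * |Real.cos φ|) * min b (l * Real.sin ψ * Real.sin φ)

/-- `S³ᴰ(l,a,b) = b·A³ᴰ(l,a) + a·B³ᴰ(l,b) − AB³ᴰ(l,a,b)` -/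
noncomputable def S3 (l a b : ℝ) : ℝ := b * A3 l a + a * B3 l b - AB3 l a b

/-- `F(α,β,t) = ∫_α^β √(sin²ψ − t²) dψ` -/
noncomputable def Faux (α β t : ℝ) : ℝ :=
  ∫ ψ in α..β, Real.sqrt (Real.sin ψ ^ 2 - t ^ 2)

/-- `G(α,β,t) = ∫_α^β (π/2 − arcsin(t / sin ψ)) dψ` -/
noncomputable def Gaux (α β t : ℝ) : ℝ :=
  ∫ ψ in α..β, (π / 2 - Real.arcsin (t / Real.sin ψ))

theorem stmt12 (l σ a b : ℝ) (hσ : 0 < σ) (hσb : σ < b) (hba : b ≤ a)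
    (hLl : Real.sqrt ((a - σ) ^ 2 + (b - σ) ^ 2) < l) :
    (b - σ) * A2 l (a - σ) + (a - σ) * B2 l (b - σ) - AB2 l (a - σ) (b - σ)
        + (σ * a + σ * b - σ ^ 2) * π = π * a * b
      ∧ P2sc l σ a b = 1 := by
  set a' := a - σ with ha'
  set b' := b - σ with hb'
  have ha'0 : 0 < a' := by simp [ha']; linarith
  have hb'0 : 0 < b' := by simp [hb']; linarith
  have hl0 : 0 < l := lt_of_le_of_lt (Real.sqrt_nonneg _) hLl
  have hl2 : a' ^ 2 + b' ^ 2 < l ^ 2 := by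
    have h := Real.sq_sqrt (by positivity : (0:ℝ) ≤ a' ^ 2 + b' ^ 2)
    nlinarith [Real.sqrt_nonneg (a' ^ 2 + b' ^ 2)]
  have hf : Continuous fun φ : ℝ => min a' (l * |Real.cos φ|) :=
    continuous_const.min (continuous_const.mul Real.continuous_cos.abs)
  have hg : Continuous fun φ : ℝ => min b' (l * Real.sin φ) :=
    continuous_const.min (continuous_const.mul Real.continuous_sin)
  have key : AB2 l a' b' = b' * A2 l a' + a' * B2 l b' - π * (a' * b') := by
    have hcongr : AB2 l a' b' =
        ∫ φ in (0:ℝ)..π, (b' * min a' (l * |Real.cos φ|)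
          + a' * min b' (l * Real.sin φ) - a' * b') := by
      unfold AB2
      apply intervalIntegral.integral_congr
      intro φ hφ
      rw [Set.uIcc_of_le Real.pi_pos.le] at hφ
      have hsin : 0 ≤ Real.sin φ := Real.sin_nonneg_of_nonneg_of_le_pi hφ.1 hφ.2
      have hdisj : a' ≤ l * |Real.cos φ| ∨ b' ≤ l * Real.sin φ := by
        by_contra h
        push_neg at h
        obtain ⟨h1, h2⟩ := h
        have hc : 0 ≤ l * |Real.cos φ| := by positivity
        have hs : 0 ≤ l * Real.sin φ := by positivity
        have e1 : (l * |Real.cos φ|) ^ 2 < a' ^ 2 := by nlinarith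
        have e2 : (l * Real.sin φ) ^ 2 < b' ^ 2 := by nlinarith
        have : (l * |Real.cos φ|) ^ 2 + (l * Real.sin φ) ^ 2 = l ^ 2 := by
          rw [mul_pow, mul_pow, sq_abs]
          nlinarith [Real.sin_sq_add_cos_sq φ]
        nlinarith
      dsimp only
      rcases hdisj with h | h
      · rw [min_eq_left h]
        have : min b' (l * Real.sin φ) ≤ b' := min_le_left _ _
        ring
      · rw [min_eq_left h]
        have : min a' (l * |Real.cos φ|) ≤ a' := min_le_left _ _
        ring
    rw [hcongr]
    have hfi : IntervalIntegrable (fun φ : ℝ => b' * min a' (l * |Real.cos φ|))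
        MeasureTheory.volume 0 π := (continuous_const.mul hf).intervalIntegrable _ _
    have hgi : IntervalIntegrable (fun φ : ℝ => a' * min b' (l * Real.sin φ))
        MeasureTheory.volume 0 π := (continuous_const.mul hg).intervalIntegrable _ _
    rw [intervalIntegral.integral_sub (hfi.add hgi)
        (intervalIntegrable_const), intervalIntegral.integral_add hfi hgi,
      intervalIntegral.integral_const_mul, intervalIntegral.integral_const_mul,
      intervalIntegral.integral_const]
    unfold A2 B2
    simp only [sub_zero, smul_eq_mul]
  have hmain : b' * A2 l a' + a' * B2 l b' - AB2 l a' b'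
      + (σ * a + σ * b - σ ^ 2) * π = π * a * b := by
    rw [key]
    simp only [ha', hb']
    ring
  refine ⟨hmain, ?_⟩
  unfold P2sc
  rw [← ha', ← hb', hmain]
  have ha0 : 0 < a := lt_of_lt_of_le (hσ.trans hσb) hba
  have hb0 : 0 < b := hσ.trans hσb
  have : π * a * b ≠ 0 := by positivity
  field_simp
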